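/- Let ξ be the unique real root of the polynomial x³ + 2x² + x + 4, and let M be the integer matrix with rows (5, −4, 3), (−12, 9, −7), (16, −12, 9). Then M has determinant 1 and the vector (1, ξ, ξ² + ξ) is an eigenvector of M; explicitly, M·(1, ξ, ξ² + ξ)ᵀ = λ·(1, ξ, ξ² + ξ)ᵀ with λ = 3ξ² − ξ + 5. -/
import Mathlib

/-- Let `ξ` be the (unique) real root of `x³ + 2x² + x + 4`, and let `M` be the integer
matrix with rows `(5, -4, 3)`, `(-12, 9, -7)`, `(16, -12, 9)`. Then `det M = 1` and
`(1, ξ, ξ² + ξ)` is an eigenvector of `M` with eigenvalue `λ = 3ξ² - ξ + 5`. -/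
theorem matrix_with_eigenvector_one_xi_xisq_plus_xi
    (ξ : ℝ) (hξ : ξ ^ 3 + 2 * ξ ^ 2 + ξ + 4 = 0)
    (M : Matrix (Fin 3) (Fin 3) ℤ)
    (hM : M = !![5, -4, 3; -12, 9, -7; 16, -12, 9]) :
    M.det = 1 ∧
    ![(1 : ℝ), ξ, ξ ^ 2 + ξ] ≠ 0 ∧
    (M.map (Int.cast : ℤ → ℝ)).mulVec ![1, ξ, ξ ^ 2 + ξ] =
      (3 * ξ ^ 2 - ξ + 5) • ![1, ξ, ξ ^ 2 + ξ] := by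
  subst hM
  refine ⟨by decide, ?_, ?_⟩
  · intro h
    have := congrFun h 0
    simp at this
  · funext i
    fin_cases i <;>
      simp [Matrix.mulVec, dotProduct, Fin.sum_univ_succ] <;> nlinarith [hξ, sq_nonneg ξ]
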